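/- The adapter encoding after attention agrees with the augmented adapter encoding on the first N1 rows: if U' = σ(M V W_v W_o W_down) W_up + M V W_v W_o and Ũ' = σ(M̃ V̂ W_down) W_up + M̃ V̂ with V̂ = Ṽ W_o, then U' = Ũ'_{1:N1,:}, provided σ acts entrywise. -/
import Mathlib
open Matrix

theorem adapter_equals_augmented_adapter (N1 N2 dk dv d l : ℕ)
    (M : Matrix (Fin N1) (Fin N2) ℝ)
    (Q : Matrix (Fin N1) (Fin dk) ℝ) (Wq : Matrix (Fin dk) (Fin d) ℝ)
    (V : Matrix (Fin N2) (Fin dv) ℝ) (Wv : Matrix (Fin dv) (Fin d) ℝ)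
    (Wo : Matrix (Fin d) (Fin d) ℝ)
    (Wdown : Matrix (Fin d) (Fin l) ℝ) (Wup : Matrix (Fin l) (Fin d) ℝ)
    (σ : ℝ → ℝ)
    (Mtil : Matrix (Fin N1 ⊕ Fin N2) (Fin N1 ⊕ Fin N2) ℝ)
    (hM : Mtil = Matrix.fromBlocks 0 M Mᵀ 0)
    (Vhat : Matrix (Fin N1 ⊕ Fin N2) (Fin d) ℝ)
    (hV : Vhat = Matrix.fromRows (Q * Wq) (V * Wv) * Wo)
    (U' : Matrix (Fin N1) (Fin d) ℝ)
    (hU : U' = (M * V * Wv * Wo * Wdown).map σ * Wup + M * V * Wv * Wo)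
    (Util' : Matrix (Fin N1 ⊕ Fin N2) (Fin d) ℝ)
    (hUtil : Util' = (Mtil * Vhat * Wdown).map σ * Wup + Mtil * Vhat) :
    ∀ (i : Fin N1) (j : Fin d), U' i j = Util' (Sum.inl i) j := by
  have key : ∀ (i : Fin N1) (j : Fin d), (Mtil * Vhat) (Sum.inl i) j = (M * V * Wv * Wo) i j := by
    intro i j
    subst hM hV
    rw [← Matrix.mul_assoc, Matrix.fromBlocks_mul_fromRows, Matrix.fromRows_mul,
      Matrix.fromRows_apply_inl, Matrix.zero_mul, zero_add, Matrix.mul_assoc M V Wv]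
  have key2 : ∀ (i : Fin N1) (k : Fin l),
      (Mtil * Vhat * Wdown) (Sum.inl i) k = (M * V * Wv * Wo * Wdown) i k := by
    intro i k
    rw [Matrix.mul_apply, Matrix.mul_apply]
    exact Finset.sum_congr rfl fun a _ => by rw [key]
  intro i j
  subst hU hUtil
  simp only [Matrix.add_apply]
  rw [key]
  congr 1
  simp only [Matrix.mul_apply, Matrix.map_apply, key2]
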